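/- Let $A$ be a commutative $\mathbb{Q}$-algebra, $D$ a derivation on $A$, and $E, \Lambda \in A$ with $D E = \Lambda + E^2$. With $\Psi_n$ defined as before ($\Psi_0 = 0$, $\Psi_1 = \Lambda$, $\Psi_{j+1} = D\Psi_j - (2j+2)E\Psi_j + j(j+1)\Lambda\Psi_{j-1}$), for every non-negative integer $n$: $D^{n+1} E = \sum_{j=0}^{n+1} \frac{(n+1)!\,(n+2)!}{j!\,(j+1)!\,(n+1-j)!}\, E^{n+1-j}\, \Psi_j + (n+1)!\, E^{n+2}$. -/

import Mathlib

open Finset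

def cc (n j : ℕ) : ℚ :=
  ((Nat.factorial (n + 1) : ℚ) * (Nat.factorial (n + 2))) /
    ((Nat.factorial j) * (Nat.factorial (j + 1)) * (Nat.factorial (n + 1 - j)))

lemma cc_eval {n j m : ℕ} (h : n + 1 = j + m) :
    cc n j = ((Nat.factorial (n+1) : ℚ) * (Nat.factorial (n+2))) /
      ((Nat.factorial j) * (Nat.factorial (j+1)) * (Nat.factorial m)) := by
  unfold cc; rw [show n + 1 - j = m by omega]

lemma fact_ne (k : ℕ) : ((Nat.factorial k : ℚ)) ≠ 0 := by
  exact_mod_cast (Nat.factorial_pos k).ne'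

lemma factQ' (k l : ℕ) (h : k = l + 1) :
    ((Nat.factorial k : ℚ)) = k * Nat.factorial l := by
  subst h; rw [Nat.factorial_succ]; push_cast; ring

-- coefficient identity for the Λ-cancellation
lemma c4 (i m : ℕ) :
    cc (i+m+1) (i+1) * ((m:ℚ)+1) = cc (i+m+1) (i+1+1) * (((i:ℚ)+1+1) * ((i:ℚ)+1+2)) := by
  rw [cc_eval (show (i+m+1)+1 = (i+1) + (m+1) by omega),
      cc_eval (show (i+m+1)+1 = (i+1+1) + m by omega),
      factQ' (m+1) m rfl, factQ' (i+1+1+1) (i+1+1) rfl, factQ' (i+1+1) (i+1) rfl]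
  have h1 := fact_ne (i+1)
  have h2 := fact_ne m
  field_simp
  push_cast
  ring

-- main coefficient recursion
lemma c2 (i m : ℕ) :
    cc (i+m+1+1) (i+1+1)
      = cc (i+m+1) (i+1+1) * ((((i+m+1 : ℕ)):ℚ) - (((i+1:ℕ)):ℚ) + 2*(((i+1:ℕ)):ℚ) + 4)
        + cc (i+m+1) (i+1) := by
  rw [cc_eval (show (i+m+1+1)+1 = (i+1+1) + (m+1) by omega),
      cc_eval (show (i+m+1)+1 = (i+1+1) + m by omega),
      cc_eval (show (i+m+1)+1 = (i+1) + (m+1) by omega),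
      factQ' (i+m+1+1+2) (i+m+1+2) (by omega), factQ' (i+m+1+1+1) (i+m+1+1) (by omega),
      factQ' (m+1) m rfl, factQ' (i+1+1+1) (i+1+1) (by omega), factQ' (i+1+1) (i+1) rfl]
  have h1 := fact_ne (i+1)
  have h2 := fact_ne m
  have h3 := fact_ne (i+m+1)
  have h4 := fact_ne (i+m+1+1)
  push_cast
  field_simp
  ring

lemma c1 (n : ℕ) :
    cc (n+1) (0+1) = cc n (0+1) * (((n:ℚ) - ((0:ℕ):ℚ)) + 2*((0:ℕ):ℚ) + 4)
      + (Nat.factorial (n+1) : ℚ) * ((n:ℚ)+2) := by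
  rw [cc_eval (show (n+1)+1 = (0+1) + (n+1) by omega),
      cc_eval (show n+1 = (0+1) + n by omega),
      factQ' (n+1+2) (n+1+1) (by omega), factQ' (n+1+1) (n+1) (by omega),
      factQ' (n+1) n rfl]
  have h1 := fact_ne n
  norm_num [Nat.factorial]
  field_simp
  ring

lemma cc_top (n : ℕ) : cc n (n+1) = 1 := by
  unfold cc
  rw [show n+1-(n+1) = 0 by omega]
  simp only [show n+1+1 = n+2 by omega, Nat.factorial_zero]
  rw [Nat.cast_one, mul_one, div_self (mul_ne_zero (fact_ne _) (fact_ne _))]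

lemma step_term {A : Type*} [CommRing A] [Algebra ℚ A]
    (D : Derivation ℚ A A) (E Λ : A)
    (hDE : D E = Λ + E ^ 2)
    (Ψ : ℕ → A)
    (hΨrec : ∀ j : ℕ, Ψ (j + 2) =
      (D (Ψ (j + 1)) - (2 * (j + 1 : ℕ) + 2 : ℚ) • (E * Ψ (j + 1)))
        + (((j + 1 : ℕ) * ((j + 1 : ℕ) + 1) : ℚ) • (Λ * Ψ j)))
    (i k : ℕ) :
    D (E ^ k * Ψ (i+1)) =
      ((k:ℚ)) • (Λ * E^(k-1) * Ψ (i+1))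
      + ((k:ℚ) + 2*(i:ℚ) + 4) • (E^(k+1) * Ψ (i+1))
      + E^k * Ψ (i+2)
      - (((i:ℚ)+1) * ((i:ℚ)+2)) • (Λ * E^k * Ψ i) := by
  have hDΨ : D (Ψ (i+1)) = Ψ (i+2) + ((2*(i:ℚ)+4)) • (E * Ψ (i+1))
      - ((((i:ℚ)+1) * ((i:ℚ)+2))) • (Λ * Ψ i) := by
    rw [hΨrec i]
    push_cast
    module
  rw [Derivation.leibniz, hDΨ, D.leibniz_pow E k, hDE]
  rcases k with _ | m
  · simp only [pow_zero, Nat.cast_zero, zero_smul, zero_mul, zero_add, one_mul,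
      Nat.zero_sub, pow_one]
    simp only [smul_eq_mul, Algebra.smul_def, map_add, map_mul, map_ofNat, map_natCast, map_one]
    ring
  · simp only [Nat.succ_sub_one, smul_eq_mul, nsmul_eq_mul]
    push_cast
    simp only [Algebra.smul_def, map_add, map_mul, map_ofNat, map_natCast, map_one]
    ring

lemma key {A : Type*} [CommRing A] [Algebra ℚ A]
    (D : Derivation ℚ A A) (E Λ : A)
    (hDE : D E = Λ + E ^ 2)
    (Ψ : ℕ → A) (hΨ0 : Ψ 0 = 0) (hΨ1 : Ψ 1 = Λ)
    (hΨrec : ∀ j : ℕ, Ψ (j + 2) =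
      (D (Ψ (j + 1)) - (2 * (j + 1 : ℕ) + 2 : ℚ) • (E * Ψ (j + 1)))
        + (((j + 1 : ℕ) * ((j + 1 : ℕ) + 1) : ℚ) • (Λ * Ψ j)))
    (n : ℕ) :
    D (∑ j ∈ range (n+2), cc n j • (E ^ (n+1-j) * Ψ j) + (Nat.factorial (n+1) : ℚ) • E ^ (n+2))
    = ∑ j ∈ range (n+3), cc (n+1) j • (E ^ (n+2-j) * Ψ j)
      + (Nat.factorial (n+2) : ℚ) • E ^ (n+3) := by
  have hL : D (∑ j ∈ range (n+2), cc n j • (E ^ (n+1-j) * Ψ j)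
        + (Nat.factorial (n+1) : ℚ) • E ^ (n+2))
      = ∑ i ∈ range (n+1), cc n (i+1) • D (E ^ (n-i) * Ψ (i+1))
        + (Nat.factorial (n+1) : ℚ) • D (E ^ (n+2)) := by
    rw [map_add, map_sum, Derivation.map_smul]
    congr 1
    rw [Finset.sum_range_succ']
    simp only [Derivation.map_smul, hΨ0, mul_zero, map_zero, smul_zero, add_zero,
      Nat.add_sub_add_right]
  have hterm : ∀ i ∈ range (n+1),
      cc n (i+1) • D (E ^ (n-i) * Ψ (i+1)) =
      ((cc n (i+1) * (((n:ℚ) - (i:ℚ)) + 2*(i:ℚ) + 4)) • (E^(n-i+1) * Ψ (i+1))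
        + cc n (i+1) • (E^(n-i) * Ψ (i+2)))
      + ((cc n (i+1) * ((n:ℚ) - (i:ℚ))) • (Λ * E^(n-i-1) * Ψ (i+1))
        - (cc n (i+1) * (((i:ℚ)+1)*((i:ℚ)+2))) • (Λ * E^(n-i) * Ψ i)) := by
    intro i hi
    have hin : i ≤ n := Nat.lt_succ_iff.mp (mem_range.mp hi)
    rw [step_term D E Λ hDE Ψ hΨrec i (n-i), Nat.cast_sub hin]
    module
  have htail : (Nat.factorial (n+1) : ℚ) • D (E ^ (n+2))
      = ((Nat.factorial (n+1) : ℚ) * ((n:ℚ)+2)) • (Λ * E^(n+1))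
        + (Nat.factorial (n+2) : ℚ) • E^(n+3) := by
    rw [D.leibniz_pow E (n+2), hDE, factQ' (n+2) (n+1) rfl,
        show n+2-1 = n+1 by omega]
    simp only [smul_eq_mul, nsmul_eq_mul]
    push_cast
    simp only [Algebra.smul_def, map_add, map_mul, map_ofNat, map_natCast, map_one]
    ring
  have hcancel :
      (∑ i ∈ range (n+1), (cc n (i+1) * ((n:ℚ) - (i:ℚ))) • (Λ * E^(n-i-1) * Ψ (i+1)))
      = ∑ i ∈ range (n+1), (cc n (i+1) * (((i:ℚ)+1)*((i:ℚ)+2))) • (Λ * E^(n-i) * Ψ i) := by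
    rw [Finset.sum_range_succ, Finset.sum_range_succ']
    simp only [hΨ0, mul_zero, smul_zero, add_zero, sub_self, zero_smul, mul_zero, zero_add]
    refine Finset.sum_congr rfl ?_
    intro i hi
    obtain ⟨m, hm⟩ := Nat.exists_eq_add_of_lt (mem_range.mp hi)
    subst hm
    simp only [show i+m+1-i-1 = m by omega, show i+m+1-(i+1) = m by omega]
    congr 1
    push_cast
    linear_combination c4 i m
  -- assemble
  rw [hL, Finset.sum_congr rfl hterm, Finset.sum_add_distrib, Finset.sum_add_distrib,
      Finset.sum_sub_distrib, hcancel, sub_self, add_zero, htail]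
  -- normalize the RHS target sum
  conv_rhs => rw [Finset.sum_range_succ']
  simp only [hΨ0, mul_zero, smul_zero, add_zero,
    show ∀ i : ℕ, n+2-(i+1) = n+1-i from fun i => by omega]
  conv_rhs => rw [Finset.sum_range_succ, Finset.sum_range_succ']
  conv_lhs => rw [Finset.sum_range_succ', Finset.sum_range_succ]
  have M2 : (∑ i ∈ range n,
        cc (n+1) (i+1+1) • (E ^ (n+1-(i+1)) * Ψ (i+1+1)))
      = ∑ i ∈ range n,
        ((cc n (i+1+1) * (((n:ℚ) - (((i+1:ℕ)):ℚ)) + 2*(((i+1:ℕ)):ℚ) + 4))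
            • (E^(n-(i+1)+1) * Ψ (i+1+1))
          + cc n (i+1) • (E^(n-i) * Ψ (i+2))) := by
    refine Finset.sum_congr rfl ?_
    intro i hi
    obtain ⟨m, hm⟩ := Nat.exists_eq_add_of_lt (mem_range.mp hi)
    subst hm
    simp only [show i+m+1+1-(i+1) = m+1 by omega, show i+m+1-(i+1)+1 = m+1 by omega,
      show i+m+1-i = m+1 by omega]
    rw [c2 i m, add_smul]
  have M1 : cc (n+1) (0+1) • (E ^ (n+1-0) * Ψ (0+1))
      = (cc n (0+1) * (((n:ℚ) - (((0:ℕ)):ℚ)) + 2*(((0:ℕ)):ℚ) + 4)) • (E^(n-0+1) * Ψ (0+1))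
        + ((Nat.factorial (n+1) : ℚ) * ((n:ℚ)+2)) • (Λ * E^(n+1)) := by
    rw [c1 n, add_smul]
    simp only [Nat.sub_zero, Nat.add_sub_cancel, show n+1-0 = n+1 by omega, hΨ1, zero_add]
    rw [mul_comm Λ (E^(n+1))]
  have M3 : cc (n+1) (n+1+1) • (E ^ (n+1-(n+1)) * Ψ (n+1+1))
      = cc n (n+1) • (E^(n-n) * Ψ (n+2)) := by
    rw [cc_top, cc_top, one_smul, one_smul,
      show n+1-(n+1) = 0 by omega, show n-n = 0 by omega, show n+1+1 = n+2 by omega]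
  rw [M2, M1, M3, Finset.sum_add_distrib]
  abel

theorem stmt_4 {A : Type*} [CommRing A] [Algebra ℚ A]
    (D : Derivation ℚ A A) (E Λ : A)
    (hDE : D E = Λ + E ^ 2)
    (Ψ : ℕ → A)
    (hΨ0 : Ψ 0 = 0)
    (hΨ1 : Ψ 1 = Λ)
    (hΨrec : ∀ j : ℕ, Ψ (j + 2) =
      (D (Ψ (j + 1)) - (2 * (j + 1 : ℕ) + 2 : ℚ) • (E * Ψ (j + 1)))
        + (((j + 1 : ℕ) * ((j + 1 : ℕ) + 1) : ℚ) • (Λ * Ψ j)))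
    (n : ℕ) :
    (⇑D)^[n + 1] E =
      (∑ j ∈ Finset.range (n + 2),
        (((Nat.factorial (n + 1) : ℚ) * (Nat.factorial (n + 2))) /
          ((Nat.factorial j) * (Nat.factorial (j + 1)) * (Nat.factorial (n + 1 - j)))) •
          (E ^ (n + 1 - j) * Ψ j))
      + (Nat.factorial (n + 1) : ℚ) • E ^ (n + 2) := by
  have hcc : ∀ (n j : ℕ), (((Nat.factorial (n + 1) : ℚ) * (Nat.factorial (n + 2))) /
        ((Nat.factorial j) * (Nat.factorial (j + 1)) * (Nat.factorial (n + 1 - j)))) = cc n j :=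
    fun _ _ => rfl
  induction n with
  | zero =>
    simp only [hcc]
    norm_num [Finset.sum_range_succ, hΨ0, hΨ1, hDE, cc, Nat.factorial]
  | succ k ih =>
    rw [Function.iterate_succ_apply', ih]
    simp only [hcc]
    simp only [show k+1+2 = k+3 by omega, show k+1+1 = k+2 by omega]
    exact key D E Λ hDE Ψ hΨ0 hΨ1 hΨrec k
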